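/- Let S be a finite set, d ∈ S, and P : S → S with P(d) = d and P^t(a) = d for all a ∈ S and all t ≥ T₀ for some T₀ ∈ ℕ. Let τ : S → ℝ_{≥0} with τ(d) = 0 and k(a) := Σ_{t=0}^{T₀−1} τ(P^t(a)). For any x : S → ℝ, define x⁺ : S → ℝ by x⁺(b) := Σ_{a ∈ S, P(a)=b} (x(a) − δ_d(a)), where δ_d(a) = 1 if a = d and 0 otherwise. Then Σ_{a∈S} k(a)·x(a) = Σ_{a∈S} τ(a)·x(a) + Σ_{b∈S} k(b)·x⁺(b). -/

import Mathlib

/-- With `P`, `d`, `τ`, `k` as in the known-path setting and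
`x⁺(b) = ∑_{a : P a = b} (x a − δ_d(a))` the one-step update of a deviation
`x`, one has the telescoping identity
`∑_a k(a) x(a) = ∑_a τ(a) x(a) + ∑_b k(b) x⁺(b)`. -/
theorem stmt_19 {S : Type*} [Fintype S] [DecidableEq S] (d : S) (P : S → S)
    (hPd : P d = d) (T₀ : ℕ)
    (hT : ∀ a : S, ∀ t : ℕ, T₀ ≤ t → P^[t] a = d)
    (τ : S → ℝ) (hτ : ∀ a, 0 ≤ τ a) (hτd : τ d = 0)
    (x : S → ℝ) :
    ∑ a : S, (∑ t ∈ Finset.range T₀, τ (P^[t] a)) * x a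
      = (∑ a : S, τ a * x a) +
        ∑ b : S, (∑ t ∈ Finset.range T₀, τ (P^[t] b)) *
          (∑ a ∈ Finset.univ.filter (fun a : S => P a = b),
            (x a - if a = d then (1 : ℝ) else 0)) := by
  set k : S → ℝ := fun a => ∑ t ∈ Finset.range T₀, τ (P^[t] a) with hk
  have hkP : ∀ a : S, k (P a) = k a - τ a := by
    intro a
    have h1 : ∑ t ∈ Finset.range (T₀ + 1), τ (P^[t] a)
        = k a + τ (P^[T₀] a) := Finset.sum_range_succ _ _
    have h2 : ∑ t ∈ Finset.range (T₀ + 1), τ (P^[t] a)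
        = (∑ t ∈ Finset.range T₀, τ (P^[t + 1] a)) + τ (P^[0] a) :=
      Finset.sum_range_succ' _ _
    have h3 : (∑ t ∈ Finset.range T₀, τ (P^[t + 1] a)) = k (P a) := by
      simp [hk, Function.iterate_succ_apply]
    rw [hT a T₀ le_rfl, hτd, add_zero] at h1
    rw [h3] at h2
    simp only [Function.iterate_zero_apply] at h2
    linarith [h1, h2]
  have hkd : k d = 0 := by
    simp [hk, Function.iterate_fixed hPd, hτd]
  have hfiber : ∑ b : S, k b *
      (∑ a ∈ Finset.univ.filter (fun a : S => P a = b),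
        (x a - if a = d then (1 : ℝ) else 0))
      = ∑ a : S, k (P a) * (x a - if a = d then (1 : ℝ) else 0) := by
    rw [← Finset.sum_fiberwise (s := Finset.univ) (g := P)
      (f := fun a => k (P a) * (x a - if a = d then (1 : ℝ) else 0))]
    refine Finset.sum_congr rfl fun b _ => ?_
    rw [Finset.mul_sum]
    refine Finset.sum_congr rfl fun a ha => ?_
    rw [(Finset.mem_filter.mp ha).2]
  rw [hfiber]
  have : ∀ a : S, k (P a) * (x a - if a = d then (1 : ℝ) else 0)
      = (k a * x a - τ a * x a) - (if a = d then k (P a) else 0) := by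
    intro a
    rw [hkP a]
    by_cases h : a = d <;> simp [h, hkP] <;> ring
  simp only [this]
  rw [Finset.sum_sub_distrib, Finset.sum_sub_distrib, Finset.sum_ite_eq' Finset.univ d]
  simp [hPd, hkd]
  rfl
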